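/- Constancy of f along the kernel of Q (proved in the discussion following Lemma 3.5): If x, y ∈ H satisfy Q(y − x) = 0 (i.e. y − x ∈ ker Q), then f(x) = f(y); consequently the directional derivative of f at any point along any direction in ker Q vanishes. -/

import Mathlib

open RealInnerProductSpace

/-- Constancy of `f` along the kernel of `Q`: if `y − x ∈ ker Q` then `f x = f y`;
consequently the directional derivative of `f` along any direction in `ker Q` vanishes. -/
theorem stmt_15
    {H : Type*} [NormedAddCommGroup H] [InnerProductSpace ℝ H] [CompleteSpace H]
    (Q : H →L[ℝ] H)
    (hQsym : ∀ x y : H, ⟪Q x, y⟫ = ⟪x, Q y⟫)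
    (hQpos : ∀ x : H, 0 ≤ ⟪Q x, x⟫)
    (ν : ℝ) (hν : 0 < ν)
    (hνQ : ∀ w ∈ (LinearMap.ker (Q : H →ₗ[ℝ] H))ᗮ, ν * ‖w‖ ≤ ‖Q w‖)
    (β : ℝ) (hβ : 0 ≤ β)
    (f : H → ℝ) (f' : H → H)
    (hf : ∀ x : H, HasGradientAt f (f' x) x)
    (hranf' : Set.range f' ⊆ Set.range Q)
    (hcoco : ∀ x y : H, ‖f' x - f' y‖ ^ 2 ≤ β * ⟪f' x - f' y, x - y⟫) :
    (∀ x y : H, Q (y - x) = 0 → f x = f y) ∧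
      (∀ x s : H, Q s = 0 → ⟪f' x, s⟫ = 0) := by
  have hperp : ∀ x s : H, Q s = 0 → ⟪f' x, s⟫ = 0 := by
    intro x s hs
    obtain ⟨w, hw⟩ := hranf' ⟨x, rfl⟩
    rw [← hw, hQsym, hs, inner_zero_right]
  refine ⟨?_, hperp⟩
  intro x y hxy
  set s := y - x with hs
  have hline : ∀ t : ℝ, HasDerivAt (fun t : ℝ => f (x + t • s)) 0 t := by
    intro t
    have hc : HasDerivAt (fun t : ℝ => x + t • s) s t := by
      simpa using ((hasDerivAt_id t).smul_const s).const_add x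
    have hF := ((hf (x + t • s)).hasFDerivAt).comp_hasDerivAt t hc
    have hF' : HasDerivAt (f ∘ fun t : ℝ => x + t • s) 0 t := by
      simpa [InnerProductSpace.toDual_apply_apply, real_inner_comm,
        hperp (x + t • s) s hxy] using hF
    exact hF'
  have hconst : ∀ t : ℝ, (fun t : ℝ => f (x + t • s)) t = (fun t : ℝ => f (x + t • s)) 0 := by
    intro t
    exact is_const_of_deriv_eq_zero (fun u => (hline u).differentiableAt)
      (fun u => (hline u).deriv) t 0
  have h1 := hconst 1
  simpa [hs] using h1.symm
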